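/- Suppose α is a totally real algebraic integer generating a field K = ℚ(α) such that 0 < σ(α) < 3 for every real embedding σ ≠ id and 4 < α < 196. Then the degree [K:ℚ] is at most 76. -/

import Mathlib

open IntermediateField Polynomial

lemma keyA' (t : ℝ) (h0 : 0 ≤ t) (h1 : t ≤ 1) : t*(1-t^2)^2 ≤ 2/5 := by
  nlinarith [sq_nonneg (t^2 - 1/5), sq_nonneg (t-1), sq_nonneg t,
    mul_nonneg h0 (sq_nonneg (t^2-1/5)), mul_nonneg h0 (sq_nonneg (t-1))]

lemma keyB' (v : ℝ) (h0 : 0 ≤ v) (h1 : v ≤ 1/4) : (v+2)^2*v^2*(v+1) ≤ 2/5 := by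
  nlinarith [sq_nonneg v, mul_nonneg h0 h0, sq_nonneg (v-1/4),
    mul_nonneg (mul_nonneg h0 h0) h0,
    mul_nonneg (mul_nonneg (mul_nonneg h0 h0) h0) h0, sub_nonneg.2 h1]

lemma keyU' (u : ℝ) (h0 : 0 ≤ u) (h1 : u ≤ 9/4) : |u^2*(2-u)^2*(1-u)| ≤ 2/5 := by
  rw [abs_le]
  rcases le_or_gt u 1 with hu | hu
  · refine ⟨?_, ?_⟩
    · nlinarith [sq_nonneg u, sq_nonneg (2-u),
        mul_nonneg (mul_nonneg (sq_nonneg u) (sq_nonneg (2-u))) (sub_nonneg.2 hu)]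
    · have := keyA' (1-u) (by linarith) (by linarith)
      nlinarith [this]
  · rcases le_or_gt u 2 with hu2 | hu2
    · refine ⟨?_, ?_⟩
      · have := keyA' (u-1) (by linarith) (by linarith)
        nlinarith [this]
      · nlinarith [sq_nonneg u, sq_nonneg (2-u),
          mul_nonneg (mul_nonneg (sq_nonneg u) (sq_nonneg (2-u)))
            (by linarith : (0:ℝ) ≤ u-1)]
    · refine ⟨?_, ?_⟩
      · have := keyB' (u-2) (by linarith) (by linarith)
        nlinarith [this]
      · nlinarith [sq_nonneg u, sq_nonneg (2-u),
          mul_nonneg (mul_nonneg (sq_nonneg u) (sq_nonneg (2-u)))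
            (by linarith : (0:ℝ) ≤ u-1)]

lemma keyX' (x : ℝ) (h0 : 0 < x) (h3 : x < 3) :
    |(x*(x-1)*(x-2)*(x-3))^2*(x^2-3*x+1)| ≤ 2/5 := by
  have h : (x*(x-1)*(x-2)*(x-3))^2*(x^2-3*x+1)
      = (3*x-x^2)^2*(2-(3*x-x^2))^2*(1-(3*x-x^2)) := by ring
  rw [h]
  exact keyU' _ (by nlinarith) (by nlinarith [sq_nonneg (x - 3/2)])

lemma keyBig' (x : ℝ) (h1 : 4 < x) (h2 : x < 196) :
    |(x*(x-1)*(x-2)*(x-3))^2*(x^2-3*x+1)| ≤ 196^10 := by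
  have q0 : (0:ℝ) ≤ x*(x-1)*(x-2)*(x-3) := by
    have := mul_pos (mul_pos (mul_pos (show (0:ℝ) < x by linarith)
      (show (0:ℝ) < x-1 by linarith)) (show (0:ℝ) < x-2 by linarith))
      (show (0:ℝ) < x-3 by linarith)
    linarith
  have q : x*(x-1)*(x-2)*(x-3) ≤ 196^4 := by
    have c1 : x*(x-1) ≤ 196*196 :=
      mul_le_mul (by linarith) (by linarith) (by linarith) (by norm_num)
    have c2 : x*(x-1)*(x-2) ≤ 196*196*196 :=
      mul_le_mul c1 (by linarith) (by linarith) (by norm_num)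
    have c3 : x*(x-1)*(x-2)*(x-3) ≤ 196*196*196*196 :=
      mul_le_mul c2 (by linarith) (by linarith) (by norm_num)
    calc x*(x-1)*(x-2)*(x-3) ≤ 196*196*196*196 := c3
    _ = 196^4 := by norm_num
  have q2 : (x*(x-1)*(x-2)*(x-3))^2 ≤ (196^4)^2 := pow_le_pow_left₀ q0 q 2
  have q3 : x^2-3*x+1 ≤ 196^2 := by nlinarith
  have q4 : (0:ℝ) ≤ x^2-3*x+1 := by nlinarith
  rw [abs_of_nonneg (mul_nonneg (sq_nonneg _) q4)]
  calc (x*(x-1)*(x-2)*(x-3))^2*(x^2-3*x+1) ≤ (196^4)^2 * 196^2 :=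
        mul_le_mul q2 q3 q4 (by positivity)
  _ = 196^10 := by norm_num

set_option maxHeartbeats 1000000 in
theorem degree_bound_76 (α : ℝ) (hint : IsIntegral ℤ α)
    (htotreal : ∀ z : ℂ, Polynomial.aeval z (minpoly ℚ α) = 0 → z.im = 0)
    (hconj : ∀ x : ℝ, Polynomial.aeval x (minpoly ℚ α) = 0 → x ≠ α → 0 < x ∧ x < 3)
    (h1 : 4 < α) (h2 : α < 196) :
    (minpoly ℚ α).natDegree ≤ 76 := by
  have halg : IsIntegral ℚ α := hint.tower_top
  set K := ℚ⟮α⟯ with hK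
  haveI : FiniteDimensional ℚ K := IntermediateField.adjoin.finiteDimensional halg
  set g : K := IntermediateField.AdjoinSimple.gen ℚ α with hg
  have hming : minpoly ℚ g = minpoly ℚ α := IntermediateField.minpoly_gen ℚ α
  have hcard : Fintype.card (K →ₐ[ℚ] ℂ) = (minpoly ℚ α).natDegree := by
    rw [AlgHom.card, IntermediateField.adjoin.finrank halg]
  have hinj : Function.Injective (fun σ : K →ₐ[ℚ] ℂ => σ g) := by
    set e := IntermediateField.algHomAdjoinIntegralEquiv ℚ (K := ℂ) halg with he
    have key : ∀ σ : K →ₐ[ℚ] ℂ, (e σ : ℂ) = σ g := by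
      intro σ
      conv_rhs => rw [← e.symm_apply_apply σ]
      exact (IntermediateField.algHomAdjoinIntegralEquiv_symm_apply_gen ℚ halg (e σ)).symm
    intro σ τ h
    apply e.injective
    exact Subtype.ext (by rw [key σ, key τ]; exact h)
  set γ : K := (g*(g-1)*(g-2)*(g-3))^2*(g^2-3*g+1) with hγ
  have hmapg : algebraMap K ℝ g = α := IntermediateField.AdjoinSimple.algebraMap_gen ℚ α
  have hgint : IsIntegral ℤ g := by
    rw [← isIntegral_algebraMap_iff (algebraMap K ℝ).injective, hmapg]
    exact hint
  have hone : IsIntegral ℤ (1 : K) := isIntegral_one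
  have htwo : IsIntegral ℤ (2 : K) := by
    have := (isIntegral_algebraMap (R := ℤ) (A := K) (x := 2))
    simpa using this
  have hthree : IsIntegral ℤ (3 : K) := by
    have := (isIntegral_algebraMap (R := ℤ) (A := K) (x := 3))
    simpa using this
  have hγint : IsIntegral ℤ γ :=
    ((((hgint.mul (hgint.sub hone)).mul (hgint.sub htwo)).mul (hgint.sub hthree)).pow 2).mul
      (((hgint.pow 2).sub (hthree.mul hgint)).add hone)
  have hγ0 : γ ≠ 0 := by
    intro h
    have h' := congrArg (algebraMap K ℝ) h
    simp only [hγ, map_mul, map_sub, map_pow, map_add, map_zero, map_one, map_ofNat,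
      hmapg] at h'
    have hp : 0 < (α*(α-1)*(α-2)*(α-3))^2*(α^2-3*α+1) := by
      have h4 : 0 < α*(α-1)*(α-2)*(α-3) :=
        mul_pos (mul_pos (mul_pos (by linarith) (by linarith)) (by linarith)) (by linarith)
      have h5 : 0 < α^2-3*α+1 := by nlinarith
      exact mul_pos (pow_pos h4 2) h5
    rw [h'] at hp
    exact lt_irrefl _ hp
  set N := Algebra.norm ℚ γ with hN
  have hNint : IsIntegral ℤ N := Algebra.isIntegral_norm ℚ hγint
  obtain ⟨m, hm⟩ := IsIntegrallyClosed.isIntegral_iff.mp hNint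
  have hN0 : N ≠ 0 := by
    simp only [hN, ne_eq, Algebra.norm_eq_zero_iff]
    exact hγ0
  have hNabs : (1 : ℝ) ≤ |(N : ℝ)| := by
    have hm0 : m ≠ 0 := by rintro rfl; simp at hm; exact hN0 hm.symm
    have : (1:ℚ) ≤ |N| := by
      rw [← hm, eq_intCast (algebraMap ℤ ℚ) m]
      rw [← Int.cast_abs]
      exact_mod_cast Int.one_le_abs hm0
    calc (1:ℝ) = ((1:ℚ):ℝ) := by norm_num
    _ ≤ ((|N|:ℚ):ℝ) := by exact_mod_cast this
    _ = |(N:ℝ)| := by push_cast; ring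
  have hprod : |(N : ℝ)| = ∏ σ : K →ₐ[ℚ] ℂ, ‖σ γ‖ := by
    have hemb := Algebra.norm_eq_prod_embeddings ℚ ℂ γ
    have h2 : ‖algebraMap ℚ ℂ N‖ = |(N:ℝ)| := by
      rw [show algebraMap ℚ ℂ N = ((N:ℝ):ℂ) by push_cast; rfl, Complex.norm_real, Real.norm_eq_abs]
    rw [← h2, hemb, norm_prod]
  have hbound : ∀ σ : K →ₐ[ℚ] ℂ,
      (σ g ≠ (α:ℂ) → ‖σ γ‖ ≤ 2/5) ∧ ‖σ γ‖ ≤ 196^10 := by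
    intro σ
    have hroot : aeval (σ g) (minpoly ℚ α) = 0 := by
      rw [← hming, Polynomial.aeval_algHom_apply, minpoly.aeval, map_zero]
    have him := htotreal _ hroot
    set x := (σ g).re with hx
    have hzx : σ g = (x:ℂ) := by
      apply Complex.ext
      · rfl
      · simpa using him
    have hxroot : aeval x (minpoly ℚ α) = 0 := by
      have h' : aeval ((x:ℝ) : ℂ) (minpoly ℚ α) = 0 := hzx ▸ hroot
      rw [show ((x:ℝ):ℂ) = algebraMap ℝ ℂ x from rfl,
        Polynomial.aeval_algebraMap_apply, show (0:ℂ) = algebraMap ℝ ℂ 0 by simp] at h'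
      exact (algebraMap ℝ ℂ).injective h'
    have hσγ : σ γ = (((x*(x-1)*(x-2)*(x-3))^2*(x^2-3*x+1) : ℝ) : ℂ) := by
      simp only [hγ, map_mul, map_sub, map_pow, map_add, map_one, map_ofNat, hzx]
      push_cast
      ring
    rw [hσγ, Complex.norm_real, Real.norm_eq_abs]
    constructor
    · intro hne
      have hxα : x ≠ α := by
        intro h
        exact hne (by rw [hzx, h])
      obtain ⟨hx0, hx3⟩ := hconj x hxroot hxα
      exact keyX' x hx0 hx3
    · rcases eq_or_ne x α with h | h
      · rw [h]
        exact keyBig' α h1 h2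
      · obtain ⟨hx0, hx3⟩ := hconj x hxroot h
        calc |(x*(x-1)*(x-2)*(x-3))^2*(x^2-3*x+1)| ≤ 2/5 := keyX' x hx0 hx3
        _ ≤ 196^10 := by norm_num
  classical
  by_contra hn
  push_neg at hn
  have hn' : 77 ≤ Fintype.card (K →ₐ[ℚ] ℂ) := by omega
  set S := Finset.univ.filter (fun σ : K →ₐ[ℚ] ℂ => σ g ≠ (α:ℂ)) with hS
  have hsub : S ⊆ Finset.univ := Finset.subset_univ S
  have hcompl : (Finset.univ \ S).card ≤ 1 := by
    apply Finset.card_le_one.mpr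
    intro a ha b hb
    simp only [hS, Finset.mem_sdiff, Finset.mem_filter, Finset.mem_univ, true_and,
      not_not] at ha hb
    exact hinj (ha.trans hb.symm)
  have hcardS : 76 ≤ S.card := by
    have h3 : (Finset.univ \ S).card = Fintype.card (K →ₐ[ℚ] ℂ) - S.card := by
      rw [Finset.card_sdiff_of_subset hsub, Finset.card_univ]
    have h4 : S.card ≤ Fintype.card (K →ₐ[ℚ] ℂ) := by
      rw [← Finset.card_univ]; exact Finset.card_le_card hsub
    omega
  have hprodS : ∏ σ ∈ S, ‖σ γ‖ ≤ (2/5)^S.card := by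
    calc ∏ σ ∈ S, ‖σ γ‖ ≤ ∏ _σ ∈ S, ((2:ℝ)/5) := by
          apply Finset.prod_le_prod
          · exact fun σ _ => norm_nonneg _
          · intro σ hσ
            simp only [hS, Finset.mem_filter] at hσ
            exact (hbound σ).1 hσ.2
    _ = (2/5)^S.card := by rw [Finset.prod_const]
  have hprodC : ∏ σ ∈ Finset.univ \ S, ‖σ γ‖ ≤ 196^10 := by
    calc ∏ σ ∈ Finset.univ \ S, ‖σ γ‖
        ≤ ∏ _σ ∈ Finset.univ \ S, ((196:ℝ)^10) := by
          apply Finset.prod_le_prod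
          · exact fun σ _ => norm_nonneg _
          · exact fun σ _ => (hbound σ).2
      _ = ((196:ℝ)^10)^(Finset.univ \ S).card := by rw [Finset.prod_const]
      _ ≤ ((196:ℝ)^10)^1 := by
          apply pow_le_pow_right₀ (by norm_num) hcompl
      _ = 196^10 := by ring
  have hsplit : (∏ σ : K →ₐ[ℚ] ℂ, ‖σ γ‖)
      = (∏ σ ∈ Finset.univ \ S, ‖σ γ‖) * ∏ σ ∈ S, ‖σ γ‖ := by
    rw [Finset.prod_sdiff hsub]
  have hfinal : (1:ℝ) ≤ 196^10 * (2/5)^76 := by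
    have e1 : ∏ σ ∈ S, ‖σ γ‖ ≤ (2/5)^76 := by
      calc ∏ σ ∈ S, ‖σ γ‖ ≤ (2/5)^S.card := hprodS
      _ ≤ (2/5)^76 := pow_le_pow_of_le_one (by norm_num) (by norm_num) hcardS
    have e2 : (0:ℝ) ≤ ∏ σ ∈ S, ‖σ γ‖ :=
      Finset.prod_nonneg (fun σ _ => norm_nonneg _)
    calc (1:ℝ) ≤ |(N:ℝ)| := hNabs
    _ = (∏ σ ∈ Finset.univ \ S, ‖σ γ‖) * ∏ σ ∈ S, ‖σ γ‖ := by
        rw [hprod, hsplit]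
    _ ≤ 196^10 * (2/5)^76 := mul_le_mul hprodC e1 e2 (by norm_num)
  have : ((196:ℝ)^10) * (2/5)^76 < 1 := by norm_num
  linarith
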